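/- arXiv:math/9810100 — 2 statements merged into one kernel-verified Lean document; each statement's English description precedes it below -/
import Mathlib

section
/- Let n ≥ 1 and let R₀ : Matrix (Fin n) (Fin (n+1)) ℕ be the column subdivision matrix with R₀ 0 0 = R₀ 0 1 = 1, R₀ i (i+1) = 1 for i ≠ 0, and all other entries 0. Suppose S : Matrix (Fin (n+1)) (Fin n) ℕ is such that B := R₀ * S and C := S * R₀ are both 0-1 matrices. Then: (i) B i j = C (i+1) (j+1) for all i, j : Fin n with i ≠ 0 (indices of C taken via the successor embedding Fin n → Fin (n+1)); (ii) C i 0 = C i 1 for every i : Fin (n+1); and (iii) C 0 j + C 1 j ≤ 1 for every j : Fin (n+1). -/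
/-- A 0-1 matrix. -/
def IsZeroOne {α β : Type*} (B : Matrix α β ℕ) : Prop := ∀ i j, B i j = 0 ∨ B i j = 1

/-- The column subdivision matrix `R₀` with `R₀ 0 0 = R₀ 0 1 = 1`, `R₀ i (i+1) = 1` for
`i ≠ 0`, and all other entries `0`. -/
def R0 (n : ℕ) : Matrix (Fin n) (Fin (n + 1)) ℕ :=
  Matrix.of fun i j =>
    if ((i : ℕ) = 0 ∧ ((j : ℕ) = 0 ∨ (j : ℕ) = 1)) ∨ ((i : ℕ) ≠ 0 ∧ (j : ℕ) = (i : ℕ) + 1)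
    then 1 else 0

lemma R0_mul_apply_ne {n : ℕ} (S : Matrix (Fin (n + 1)) (Fin n) ℕ)
    (i : Fin n) (hi : (i : ℕ) ≠ 0) (j : Fin n) :
    (R0 n * S) i j = S i.succ j := by
  simp only [Matrix.mul_apply, R0, Matrix.of_apply]
  rw [Finset.sum_eq_single i.succ]
  · simp [hi, Fin.val_succ]
  · intro b _ hb
    have : ¬(((i : ℕ) = 0 ∧ ((b : ℕ) = 0 ∨ (b : ℕ) = 1)) ∨
        ((i : ℕ) ≠ 0 ∧ (b : ℕ) = (i : ℕ) + 1)) := by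
      rintro (⟨h0, _⟩ | ⟨_, h1⟩)
      · exact hi h0
      · exact hb (Fin.ext (by simp [Fin.val_succ, h1]))
    rw [if_neg this, zero_mul]
  · simp

lemma R0_mul_apply_zero {m : ℕ} (S : Matrix (Fin (m + 2)) (Fin (m + 1)) ℕ)
    (i : Fin (m + 1)) (hi : (i : ℕ) = 0) (j : Fin (m + 1)) :
    (R0 (m + 1) * S) i j = S 0 j + S 1 j := by
  simp only [Matrix.mul_apply, R0, Matrix.of_apply]
  rw [Fin.sum_univ_succ, Fin.sum_univ_succ]
  have h2 : ∀ k : Fin m, (if ((i : ℕ) = 0 ∧ ((k.succ.succ : ℕ) = 0 ∨ (k.succ.succ : ℕ) = 1)) ∨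
      ((i : ℕ) ≠ 0 ∧ (k.succ.succ : ℕ) = (i : ℕ) + 1) then 1 else 0) * S k.succ.succ j = 0 := by
    intro k
    have : ¬(((i : ℕ) = 0 ∧ ((k.succ.succ : ℕ) = 0 ∨ (k.succ.succ : ℕ) = 1)) ∨
        ((i : ℕ) ≠ 0 ∧ (k.succ.succ : ℕ) = (i : ℕ) + 1)) := by
      rintro (⟨_, h | h⟩ | ⟨h, _⟩) <;> simp [Fin.val_succ, hi] at h
    rw [if_neg this, zero_mul]
  simp only [h2]
  simp [hi, Fin.val_succ, Fin.succ_zero_eq_one]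

lemma mul_R0_apply_le_one {n : ℕ} (hn : 1 ≤ n) (S : Matrix (Fin (n + 1)) (Fin n) ℕ)
    (i : Fin (n + 1)) (j : Fin (n + 1)) (hj : (j : ℕ) ≤ 1) :
    (S * R0 n) i j = S i ⟨0, hn⟩ := by
  simp only [Matrix.mul_apply, R0, Matrix.of_apply]
  rw [Finset.sum_eq_single (⟨0, hn⟩ : Fin n)]
  · have : (((⟨0, hn⟩ : Fin n) : ℕ) = 0 ∧ ((j : ℕ) = 0 ∨ (j : ℕ) = 1)) ∨
        (((⟨0, hn⟩ : Fin n) : ℕ) ≠ 0 ∧ (j : ℕ) = ((⟨0, hn⟩ : Fin n) : ℕ) + 1) :=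
      Or.inl ⟨rfl, by omega⟩
    rw [if_pos this, mul_one]
  · intro b _ hb
    have hb' : (b : ℕ) ≠ 0 := fun h => hb (Fin.ext h)
    have : ¬(((b : ℕ) = 0 ∧ ((j : ℕ) = 0 ∨ (j : ℕ) = 1)) ∨
        ((b : ℕ) ≠ 0 ∧ (j : ℕ) = (b : ℕ) + 1)) := by
      rintro (⟨h, _⟩ | ⟨_, h⟩)
      · exact hb' h
      · omega
    rw [if_neg this, mul_zero]
  · simp

lemma mul_R0_apply_ge_two {n : ℕ} (S : Matrix (Fin (n + 1)) (Fin n) ℕ)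
    (i : Fin (n + 1)) (j : Fin (n + 1)) (hj : 2 ≤ (j : ℕ)) :
    (S * R0 n) i j = S i ⟨(j : ℕ) - 1, by omega⟩ := by
  simp only [Matrix.mul_apply, R0, Matrix.of_apply]
  rw [Finset.sum_eq_single (⟨(j : ℕ) - 1, by omega⟩ : Fin n)]
  · have : ((((j : ℕ) - 1 : ℕ)) = 0 ∧ ((j : ℕ) = 0 ∨ (j : ℕ) = 1)) ∨
        (((j : ℕ) - 1 : ℕ) ≠ 0 ∧ (j : ℕ) = ((j : ℕ) - 1) + 1) := Or.inr ⟨by omega, by omega⟩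
    simp only [this, if_pos]
    ring
  · intro b _ hb
    have hb' : (b : ℕ) ≠ (j : ℕ) - 1 := fun h => hb (Fin.ext h)
    have : ¬(((b : ℕ) = 0 ∧ ((j : ℕ) = 0 ∨ (j : ℕ) = 1)) ∨
        ((b : ℕ) ≠ 0 ∧ (j : ℕ) = (b : ℕ) + 1)) := by
      rintro (⟨_, h⟩ | ⟨_, h⟩) <;> omega
    rw [if_neg this, mul_zero]
  · simp

theorem stmt_17 (n : ℕ) (hn : 1 ≤ n) (S : Matrix (Fin (n + 1)) (Fin n) ℕ)
    (hB : IsZeroOne (R0 n * S)) (hC : IsZeroOne (S * R0 n)) :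
    (∀ (i j : Fin n), i ≠ ⟨0, hn⟩ →
        (R0 n * S) i j = (S * R0 n) (Fin.succ i) (Fin.succ j)) ∧
    (∀ i : Fin (n + 1), (S * R0 n) i 0 = (S * R0 n) i 1) ∧
    (∀ j : Fin (n + 1), (S * R0 n) 0 j + (S * R0 n) 1 j ≤ 1) := by
  refine ⟨?_, ?_, ?_⟩
  · intro i j hij
    have hi : (i : ℕ) ≠ 0 := fun h => hij (Fin.ext h)
    rw [R0_mul_apply_ne S i hi j]
    rcases Nat.lt_or_ge (j : ℕ) 1 with hj | hj
    · have hj0 : (j : ℕ) = 0 := by omega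
      rw [mul_R0_apply_le_one hn S _ _ (by simp [Fin.val_succ, hj0])]
      congr 1
      exact Fin.ext hj0
    · rw [mul_R0_apply_ge_two S _ _ (by simp [Fin.val_succ]; omega)]
      congr 1
  · intro i
    have h0 : ((0 : Fin (n + 1)) : ℕ) ≤ 1 := by simp
    have h1 : ((1 : Fin (n + 1)) : ℕ) ≤ 1 := by
      have h : ((1 : Fin (n + 1)) : ℕ) = 1 % (n + 1) := rfl
      rw [Nat.mod_eq_of_lt (by omega)] at h
      omega
    rw [mul_R0_apply_le_one hn S i 0 h0, mul_R0_apply_le_one hn S i 1 h1]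
  · intro j
    obtain ⟨m, rfl⟩ : ∃ m, n = m + 1 := ⟨n - 1, by omega⟩
    have key : ∀ k : Fin (m + 1), S 0 k + S 1 k ≤ 1 := by
      intro k
      have := R0_mul_apply_zero S ⟨0, hn⟩ rfl k
      rcases hB ⟨0, hn⟩ k with h | h <;> omega
    rcases Nat.lt_or_ge (j : ℕ) 2 with hj | hj
    · rw [mul_R0_apply_le_one hn S 0 j (by omega), mul_R0_apply_le_one hn S 1 j (by omega)]
      exact key _
    · rw [mul_R0_apply_ge_two S 0 j hj, mul_R0_apply_ge_two S 1 j hj]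
      exact key _
end

section
/- Let B : Matrix (Fin 2) (Fin 2) ℕ have rows (1,1), (0,0), let C : Matrix (Fin 3) (Fin 3) ℕ have rows (1,1,1), (0,0,0), (0,0,0), let R : Matrix (Fin 2) (Fin 3) ℕ have rows (1,1,1), (0,0,0), and let S : Matrix (Fin 3) (Fin 2) ℕ have rows (1,0), (0,1), (0,0). Then B = R * S, C = S * R, and R is column subdivision; nevertheless C is not, up to relabeling, a vertex explosion of B: there do not exist v : Fin 2, a partition supp(B v) = M₁ ⊔ M₂ into nonempty sets, and a bijection τ : Fin 3 ≃ ({u : Fin 2 | u ≠ v} ⊕ {v′, v″}) with C i j = C₀ (τ i) (τ j) for all i, j, where C₀ is the vertex explosion of B at v with respect to (M₁, M₂). -/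
/-- A column subdivision matrix: a 0-1 matrix each of whose columns contains at most one
nonzero entry. -/
def IsColumnSubdivision {α β : Type*} (R : Matrix α β ℕ) : Prop :=
  IsZeroOne R ∧ ∀ j i i', R i j ≠ 0 → R i' j ≠ 0 → i = i'

open Classical in
/-- The vertex explosion of `B` at `v` with respect to `(M₁, M₂)`; the vertex `v` is split
into `v′ = Sum.inr 0` and `v″ = Sum.inr 1`. -/
noncomputable def vertexExplosion {V : Type*} (B : Matrix V V ℕ) (v : V) (M₁ M₂ : Set V) :
    ({u : V // u ≠ v} ⊕ Fin 2) → ({u : V // u ≠ v} ⊕ Fin 2) → ℕ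
  | Sum.inl u, Sum.inl w => B u.1 w.1
  | Sum.inl u, Sum.inr _ => B u.1 v
  | Sum.inr a, Sum.inl w => if (a = 0 ∧ w.1 ∈ M₁) ∨ (a = 1 ∧ w.1 ∈ M₂) then 1 else 0
  | Sum.inr a, Sum.inr _ => if (a = 0 ∧ v ∈ M₁) ∨ (a = 1 ∧ v ∈ M₂) then 1 else 0

/-- The matrix `B` with rows `(1,1), (0,0)`. -/
def B : Matrix (Fin 2) (Fin 2) ℕ := !![1,1; 0,0]

/-- The matrix `C` with rows `(1,1,1), (0,0,0), (0,0,0)`. -/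
def C : Matrix (Fin 3) (Fin 3) ℕ := !![1,1,1; 0,0,0; 0,0,0]

/-- The matrix `R` with rows `(1,1,1), (0,0,0)`. -/
def R : Matrix (Fin 2) (Fin 3) ℕ := !![1,1,1; 0,0,0]

/-- The matrix `S` with rows `(1,0), (0,1), (0,0)`. -/
def S : Matrix (Fin 3) (Fin 2) ℕ := !![1,0; 0,1; 0,0]

lemma fin2_cases (v : Fin 2) : v = 0 ∨ v = 1 :=
  if h : v = 0 then Or.inl h else Or.inr (Fin.eq_one_of_ne_zero v h)

theorem stmt_18 :
    B = R * S ∧ C = S * R ∧ IsColumnSubdivision R ∧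
    ¬ ∃ (v : Fin 2) (M₁ M₂ : Set (Fin 2)),
        M₁.Nonempty ∧ M₂.Nonempty ∧ Disjoint M₁ M₂ ∧ M₁ ∪ M₂ = {w | B v w = 1} ∧
        ∃ τ : Fin 3 ≃ ({u : Fin 2 // u ≠ v} ⊕ Fin 2),
          ∀ i j, C i j = vertexExplosion B v M₁ M₂ (τ i) (τ j) := by
  refine ⟨?_, ?_, ?_, ?_⟩
  · ext i j
    fin_cases i <;> fin_cases j <;>
      simp [B, R, S, Matrix.mul_apply, Fin.sum_univ_succ, Matrix.vecHead, Matrix.vecTail]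
  · ext i j
    fin_cases i <;> fin_cases j <;>
      simp [C, R, S, Matrix.mul_apply, Fin.sum_univ_succ, Matrix.vecHead, Matrix.vecTail]
  · refine ⟨fun i j => ?_, fun j i i' hi hi' => ?_⟩
    · fin_cases i <;> fin_cases j <;> simp [R]
    · fin_cases i <;> fin_cases i' <;> fin_cases j <;> simp_all [R]
  · rintro ⟨v, M₁, M₂, ⟨x, hx⟩, ⟨y, hy⟩, hdis, huni, τ, hτ⟩
    rcases fin2_cases v with rfl | rfl
    · -- v = 0
      have hxy1 : y ∉ M₁ := fun h => (Set.disjoint_left.mp hdis h) hy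
      have hxy2 : x ∉ M₂ := fun h => (Set.disjoint_left.mp hdis hx) h
      have key : ∃ s, vertexExplosion B 0 M₁ M₂ (τ 0) s = 0 := by
        rcases h : τ 0 with u | a
        · refine ⟨Sum.inl u, ?_⟩
          have hu : u.1 = 1 := Fin.eq_one_of_ne_zero u.1 u.2
          simp [vertexExplosion, hu, B]
        · fin_cases a
          · rcases fin2_cases y with rfl | rfl
            · exact ⟨Sum.inr 0, by simp [vertexExplosion, hxy1]⟩
            · exact ⟨Sum.inl ⟨1, by decide⟩, by simp [vertexExplosion, hxy1]⟩
          · rcases fin2_cases x with rfl | rfl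
            · exact ⟨Sum.inr 1, by simp [vertexExplosion, hxy2]⟩
            · exact ⟨Sum.inl ⟨1, by decide⟩, by simp [vertexExplosion, hxy2]⟩
      obtain ⟨s, hs⟩ := key
      have h0 := hτ 0 (τ.symm s)
      rw [Equiv.apply_symm_apply, hs] at h0
      have hC : ∀ j, C 0 j = 1 := by decide
      rw [hC] at h0
      exact one_ne_zero h0
    · -- v = 1 : support of row 1 of B is empty
      have hmem : x ∈ M₁ ∪ M₂ := Or.inl hx
      rw [huni] at hmem
      have hB : B 1 x = 1 := hmem
      fin_cases x <;> simp [B] at hB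
end
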